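/- Given staircase data, the ideal generated by the staircase generators equals the defining ideal of the associated Ferrers configuration: Ideal.span {f₀, f₁, …, f_r} = ⋂_{i=1}^{t_r} ⋂_{j=1}^{α_i} ⟨Hᵢ, Vⱼ⟩; in particular this ideal is the defining ideal of an ACM set of points of ℙ¹×ℙ¹. -/

import Mathlib

/- Common setup: R = ℂ[x₀,x₁,y₀,y₁] as MvPolynomial (Fin 4) ℂ with
   x₀ = X 0, x₁ = X 1, y₀ = X 2, y₁ = X 3.
   `Hf a` is the horizontal form a₁x₀ - a₀x₁ of the point a = [a₀:a₁] ∈ ℙ¹;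
   `Vf b` is the vertical form b₁y₀ - b₀y₁;
   `cross a b ≠ 0` says the (nonzero) pairs a, b are non-proportional,
   i.e. define distinct points of ℙ¹. -/

open MvPolynomial

noncomputable section

abbrev R : Type := MvPolynomial (Fin 4) ℂ

def Hf (a : ℂ × ℂ) : R := C a.2 * X 0 - C a.1 * X 1

def Vf (b : ℂ × ℂ) : R := C b.2 * X 2 - C b.1 * X 3

def cross (a b : ℂ × ℂ) : ℂ := a.1 * b.2 - a.2 * b.1

/-- The defining ideal of the point P = A×B of ℙ¹×ℙ¹. -/
def Ipt (P : (ℂ × ℂ) × (ℂ × ℂ)) : Ideal R := Ideal.span {Hf P.1, Vf P.2}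

/-- The defining ideal of a finite set of points (I_∅ = R = ⊤). -/
def Ipts (X : Finset ((ℂ × ℂ) × (ℂ × ℂ))) : Ideal R := X.inf Ipt

/-- The defining ideal of a set of points (I_∅ = R = ⊤). -/
def IptsSet (W : Set ((ℂ × ℂ) × (ℂ × ℂ))) : Ideal R := ⨅ P ∈ W, Ipt P

/-- Bihomogeneous: homogeneous separately in x₀,x₁ and in y₀,y₁. -/
def Bihom (f : R) : Prop :=
  ∃ a b : ℕ, IsWeightedHomogeneous (![1,1,0,0] : Fin 4 → ℕ) f a ∧
    IsWeightedHomogeneous (![0,0,1,1] : Fin 4 → ℕ) f b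

/-- `G` minimally generates `I`. -/
def MinGen (G : Finset R) (I : Ideal R) : Prop :=
  Ideal.span (G : Set R) = I ∧ ∀ g ∈ G, Ideal.span ((G : Set R) \ {g}) ≠ I

/-- Staircase data: r ≥ 1, 0 = t₀ < t₁ < ⋯ < t_r, 0 = s₀ < s₁ < ⋯ < s_r,
    pairwise distinct points A₁,…,A_{t_r} of ℙ¹ and pairwise distinct points
    B₁,…,B_{s_r} of ℙ¹ (all indexed starting at 1). -/
structure Staircase where
  r : ℕ
  t : ℕ → ℕ
  s : ℕ → ℕ
  A : ℕ → ℂ × ℂ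
  B : ℕ → ℂ × ℂ
  hr : 1 ≤ r
  ht0 : t 0 = 0
  hs0 : s 0 = 0
  ht : ∀ k, k < r → t k < t (k + 1)
  hs : ∀ k, k < r → s k < s (k + 1)
  hA0 : ∀ i ∈ Finset.Icc 1 (t r), A i ≠ 0
  hB0 : ∀ j ∈ Finset.Icc 1 (s r), B j ≠ 0
  hAd : ∀ i ∈ Finset.Icc 1 (t r), ∀ i' ∈ Finset.Icc 1 (t r), i ≠ i' → cross (A i) (A i') ≠ 0
  hBd : ∀ j ∈ Finset.Icc 1 (s r), ∀ j' ∈ Finset.Icc 1 (s r), j ≠ j' → cross (B j) (B j') ≠ 0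

/-- The staircase generator f_k = H₁⋯H_{t_k} · V₁⋯V_{s_{r-k}}. -/
def stairGen (S : Staircase) (k : ℕ) : R :=
  (∏ i ∈ Finset.Icc 1 (S.t k), Hf (S.A i)) * ∏ j ∈ Finset.Icc 1 (S.s (S.r - k)), Vf (S.B j)

/-! ### The parametrization map ψ and the kernel characterization -/

/-- ψ maps R onto ℂ[u,v] parametrizing the 2-plane H_a = V_b = 0. -/
def psi (a b : ℂ × ℂ) : R →ₐ[ℂ] MvPolynomial (Fin 2) ℂ :=
  aeval ![C a.1 * X 0, C a.2 * X 0, C b.1 * X 1, C b.2 * X 1]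

lemma psi_Hf (a b a' : ℂ × ℂ) : psi a b (Hf a') = C (cross a a') * X 0 := by
  simp [psi, Hf, cross]
  ring

lemma psi_Vf (a b b' : ℂ × ℂ) : psi a b (Vf b') = C (cross b b') * X 1 := by
  simp [psi, Vf, cross]
  ring

lemma span_le_ker (a b : ℂ × ℂ) :
    Ideal.span {Hf a, Vf b} ≤ RingHom.ker (psi a b) := by
  rw [Ideal.span_le]
  rintro x (rfl | rfl) <;> simp [RingHom.mem_ker, psi_Hf, psi_Vf, cross] <;> ring

/-- If an algebra endomorphism moves each variable by an element of `I`,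
then it moves every polynomial by an element of `I`. -/
lemma sub_aeval_mem (σ : R →ₐ[ℂ] R) (I : Ideal R)
    (h : ∀ i, X i - σ (X i) ∈ I) : ∀ f : R, f - σ f ∈ I := by
  intro f
  induction f using MvPolynomial.induction_on with
  | C a => simp [AlgHom.commutes]
  | add p q hp hq =>
      have := I.add_mem hp hq
      rw [map_add]
      convert this using 1
      ring
  | mul_X p n hp =>
      rw [map_mul]
      have : p * X n - σ p * σ (X n)
          = (p - σ p) * X n + σ p * (X n - σ (X n)) := by ring
      rw [this]
      exact I.add_mem (I.mul_mem_right _ hp) (I.mul_mem_left _ (h n))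

lemma exists_dual {a : ℂ × ℂ} (ha : a ≠ 0) : ∃ c d : ℂ, c * a.1 + d * a.2 = 1 := by
  rcases eq_or_ne a.1 0 with h1 | h1
  · have h2 : a.2 ≠ 0 := by
      intro h2; exact ha (Prod.ext h1 h2)
    exact ⟨0, a.2⁻¹, by field_simp; ring⟩
  · exact ⟨a.1⁻¹, 0, by field_simp; ring⟩

lemma ker_psi_eq (a b : ℂ × ℂ) (ha : a ≠ 0) (hb : b ≠ 0) :
    RingHom.ker (psi a b) = Ideal.span {Hf a, Vf b} := by
  refine le_antisymm ?_ (span_le_ker a b)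
  obtain ⟨c, d, hcd⟩ := exists_dual ha
  obtain ⟨c', d', hcd'⟩ := exists_dual hb
  set L : R := C c * X 0 + C d * X 1 with hL
  set L' : R := C c' * X 2 + C d' * X 3 with hL'
  set σ : R →ₐ[ℂ] R := aeval ![C a.1 * L, C a.2 * L, C b.1 * L', C b.2 * L'] with hσ
  set χ : MvPolynomial (Fin 2) ℂ →ₐ[ℂ] R := aeval ![L, L'] with hχ
  have hC1 : (C (c * a.1 + d * a.2) : R) = 1 := by rw [hcd]; simp
  have hC2 : (C (c' * b.1 + d' * b.2) : R) = 1 := by rw [hcd']; simp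
  simp only [map_add, map_mul] at hC1 hC2
  have hmove : ∀ i : Fin 4, X i - σ (X i) ∈ Ideal.span {Hf a, Vf b} := by
    have hH : Hf a ∈ Ideal.span {Hf a, Vf b} :=
      Ideal.subset_span (by simp)
    have hV : Vf b ∈ Ideal.span {Hf a, Vf b} :=
      Ideal.subset_span (by simp)
    have e0 : X (0 : Fin 4) - σ (X 0) ∈ Ideal.span {Hf a, Vf b} := by
      have : X (0 : Fin 4) - σ (X 0) = C d * Hf a := by
        simp only [hσ, aeval_X]
        simp only [Matrix.cons_val_zero, hL, Hf]
        linear_combination (-(X 0 : R)) * hC1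
      rw [this]; exact Ideal.mul_mem_left _ _ hH
    have e1 : X (1 : Fin 4) - σ (X 1) ∈ Ideal.span {Hf a, Vf b} := by
      have : X (1 : Fin 4) - σ (X 1) = (- C c) * Hf a := by
        simp only [hσ, aeval_X]
        simp only [Matrix.cons_val_one, Matrix.head_cons, Matrix.cons_val_zero, hL, Hf]
        linear_combination (-(X 1 : R)) * hC1
      rw [this]; exact Ideal.mul_mem_left _ _ hH
    have e2 : X (2 : Fin 4) - σ (X 2) ∈ Ideal.span {Hf a, Vf b} := by
      have : X (2 : Fin 4) - σ (X 2) = C d' * Vf b := by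
        simp only [hσ, aeval_X]
        simp only [Matrix.cons_val_two, Matrix.tail_cons, Matrix.head_cons, Matrix.cons_val_zero, hL', Vf]
        linear_combination (-(X 2 : R)) * hC2
      rw [this]; exact Ideal.mul_mem_left _ _ hV
    have e3 : X (3 : Fin 4) - σ (X 3) ∈ Ideal.span {Hf a, Vf b} := by
      have : X (3 : Fin 4) - σ (X 3) = (- C c') * Vf b := by
        simp only [hσ, aeval_X]
        simp only [Matrix.cons_val_three, Matrix.tail_cons, Matrix.head_cons, Matrix.cons_val_zero, hL', Vf]
        linear_combination (-(X 3 : R)) * hC2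
      rw [this]; exact Ideal.mul_mem_left _ _ hV
    intro i
    fin_cases i
    · exact e0
    · exact e1
    · exact e2
    · exact e3
  have hcomp : χ.comp (psi a b) = σ := by
    apply MvPolynomial.algHom_ext
    intro i
    fin_cases i <;>
      simp [hχ, hσ, psi]
  intro f hf
  have hσf : σ f = 0 := by
    rw [← hcomp]
    simp only [AlgHom.comp_apply]
    rw [RingHom.mem_ker] at hf
    rw [hf, map_zero]
  have := sub_aeval_mem σ _ hmove f
  rwa [hσf, sub_zero] at this

lemma Ipt_isPrime {a b : ℂ × ℂ} (ha : a ≠ 0) (hb : b ≠ 0) :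
    (Ideal.span {Hf a, Vf b}).IsPrime := by
  rw [← ker_psi_eq a b ha hb]
  exact RingHom.ker_isPrime _

lemma Hf_not_mem {a b a' : ℂ × ℂ} (ha : a ≠ 0) (hb : b ≠ 0)
    (h : cross a a' ≠ 0) : Hf a' ∉ Ideal.span {Hf a, Vf b} := by
  rw [← ker_psi_eq a b ha hb, RingHom.mem_ker, psi_Hf]
  exact mul_ne_zero (by simpa using h) (X_ne_zero 0)

lemma Vf_not_mem {a b b' : ℂ × ℂ} (ha : a ≠ 0) (hb : b ≠ 0)
    (h : cross b b' ≠ 0) : Vf b' ∉ Ideal.span {Hf a, Vf b} := by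
  rw [← ker_psi_eq a b ha hb, RingHom.mem_ker, psi_Vf]
  exact mul_ne_zero (by simpa using h) (X_ne_zero 1)

lemma cross_comm_ne {a b : ℂ × ℂ} (h : cross a b ≠ 0) : cross b a ≠ 0 := by
  simp only [cross] at *
  intro h'; apply h; linear_combination -h'

/-! ### Generic membership helpers -/

lemma mem_biInf {s : Finset ℕ} {F : ℕ → Ideal R} {g : R} :
    (g ∈ ⨅ j ∈ s, F j) ↔ ∀ j ∈ s, g ∈ F j := by
  simp [Submodule.mem_iInf]

lemma mem_span_pair_left {x y : R} : x ∈ Ideal.span {x, y} :=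
  Ideal.subset_span (by simp)

lemma mem_span_pair_right_dvd {x y z : R} (h : z ∣ y) : y ∈ Ideal.span {x, z} := by
  obtain ⟨c, rfl⟩ := h
  exact Ideal.mul_mem_right _ _ (Ideal.subset_span (by simp))

/-! ### The column lemma -/

lemma column (a : ℂ × ℂ) (ha : a ≠ 0) (B : ℕ → ℂ × ℂ) :
    ∀ m : ℕ, (∀ j ∈ Finset.Icc 1 m, B j ≠ 0) →
    (∀ j ∈ Finset.Icc 1 m, ∀ j' ∈ Finset.Icc 1 m, j ≠ j' → cross (B j) (B j') ≠ 0) →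
    (⨅ j ∈ Finset.Icc 1 m, Ideal.span {Hf a, Vf (B j)})
      = Ideal.span {Hf a, ∏ j ∈ Finset.Icc 1 m, Vf (B j)} := by
  intro m
  induction m with
  | zero =>
      intro _ _
      have hemp : Finset.Icc 1 0 = (∅ : Finset ℕ) := by simp
      rw [hemp]
      have h1 : (1 : R) ∈ Ideal.span {Hf a, ∏ j ∈ (∅ : Finset ℕ), Vf (B j)} := by
        simp only [Finset.prod_empty]
        exact Ideal.subset_span (by simp)
      rw [(Ideal.eq_top_iff_one _).mpr h1]
      simp
  | succ m IH =>
      intro hB0 hBd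
      have hsub : Finset.Icc 1 m ⊆ Finset.Icc 1 (m + 1) :=
        Finset.Icc_subset_Icc_right (by omega)
      have hB0' : ∀ j ∈ Finset.Icc 1 m, B j ≠ 0 := fun j hj => hB0 j (hsub hj)
      have hBd' : ∀ j ∈ Finset.Icc 1 m, ∀ j' ∈ Finset.Icc 1 m, j ≠ j' →
          cross (B j) (B j') ≠ 0 := fun j hj j' hj' => hBd j (hsub hj) j' (hsub hj')
      have hm1 : m + 1 ∈ Finset.Icc 1 (m + 1) := by simp
      have hprod : ∏ j ∈ Finset.Icc 1 (m + 1), Vf (B j)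
          = (∏ j ∈ Finset.Icc 1 m, Vf (B j)) * Vf (B (m + 1)) :=
        Finset.prod_Icc_succ_top (by omega) _
      ext g
      rw [mem_biInf]
      constructor
      · intro hg
        have hg1 : g ∈ Ideal.span {Hf a, ∏ j ∈ Finset.Icc 1 m, Vf (B j)} := by
          rw [← IH hB0' hBd', mem_biInf]
          exact fun j hj => hg j (hsub hj)
        obtain ⟨p, q, hpq⟩ := Ideal.mem_span_pair.mp hg1
        have hP : (Ideal.span {Hf a, Vf (B (m + 1))}).IsPrime :=
          Ipt_isPrime ha (hB0 _ hm1)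
        have hqW : q * ∏ j ∈ Finset.Icc 1 m, Vf (B j)
            ∈ Ideal.span {Hf a, Vf (B (m + 1))} := by
          have : q * ∏ j ∈ Finset.Icc 1 m, Vf (B j) = g - p * Hf a := by
            linear_combination hpq
          rw [this]
          exact Ideal.sub_mem _ (hg _ hm1) (Ideal.mul_mem_left _ _ mem_span_pair_left)
        have hWnot : (∏ j ∈ Finset.Icc 1 m, Vf (B j))
            ∉ Ideal.span {Hf a, Vf (B (m + 1))} := by
          rw [Ideal.IsPrime.prod_mem_iff]
          rintro ⟨j, hj, hjmem⟩
          have hjm : j ∈ Finset.Icc 1 (m+1) := hsub hj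
          have hne : (m + 1 : ℕ) ≠ j := by
            have := (Finset.mem_Icc.mp hj).2; omega
          exact Vf_not_mem ha (hB0 _ hm1) (hBd _ hm1 _ hjm hne) hjmem
        have hq : q ∈ Ideal.span {Hf a, Vf (B (m + 1))} := by
          rcases hP.mem_or_mem hqW with h | h
          · exact h
          · exact absurd h hWnot
        obtain ⟨c, d, hcd⟩ := Ideal.mem_span_pair.mp hq
        rw [Ideal.mem_span_pair]
        refine ⟨p + c * ∏ j ∈ Finset.Icc 1 m, Vf (B j), d, ?_⟩
        rw [hprod]
        linear_combination hpq + (∏ j ∈ Finset.Icc 1 m, Vf (B j)) * hcd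
      · intro hg j hj
        obtain ⟨p, q, hpq⟩ := Ideal.mem_span_pair.mp hg
        rw [← hpq]
        refine Ideal.add_mem _ (Ideal.mul_mem_left _ _ mem_span_pair_left) ?_
        exact Ideal.mul_mem_left _ _
          (mem_span_pair_right_dvd (Finset.dvd_prod_of_mem _ hj))

/-! ### Arithmetic helpers -/

lemma stair_mono {t : ℕ → ℕ} {r : ℕ} (h : ∀ k, k < r → t k < t (k + 1)) :
    ∀ k k', k ≤ k' → k' ≤ r → t k ≤ t k' := by
  intro k k' hkk' hk'r
  induction k' with
  | zero =>
      have hk0 : k = 0 := Nat.le_zero.mp hkk'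
      subst hk0; exact le_refl _
  | succ n IHn =>
      rcases Nat.lt_or_ge k (n + 1) with h' | h'
      · have h1 : t k ≤ t n := IHn (by omega) (by omega)
        have h2 : t n < t (n + 1) := h n (by omega)
        omega
      · have hk : k = n + 1 := by omega
        subst hk; exact le_refl _

lemma stair_level {t : ℕ → ℕ} :
    ∀ r : ℕ, (∀ k, k < r → t k < t (k + 1)) → ∀ i : ℕ, t 0 < i → i ≤ t r →
      ∃ k, k < r ∧ t k < i ∧ i ≤ t (k + 1) := by
  intro r
  induction r with
  | zero => intro _ i h1 h2; omega
  | succ n IHn =>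
      intro h i h1 h2
      rcases le_or_gt i (t n) with h' | h'
      · obtain ⟨k, hk, hk1, hk2⟩ := IHn (fun k hk => h k (by omega)) i h1 h'
        exact ⟨k, by omega, hk1, hk2⟩
      · exact ⟨n, by omega, h', h2⟩

lemma prod_shift (f : ℕ → R) (u : ℕ) :
    ∏ i ∈ Finset.Icc 1 (u + 1), f i = f 1 * ∏ i ∈ Finset.Icc 1 u, f (i + 1) := by
  induction u with
  | zero => simp
  | succ n IHn =>
      rw [Finset.prod_Icc_succ_top (by omega) f, IHn,
        Finset.prod_Icc_succ_top (by omega) (fun i => f (i + 1)), mul_assoc]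

/-! ### The rows lemma -/

/-- Easy inclusion: each staircase-type generator lies in every row ideal. -/
lemma rows_le (B : ℕ → ℂ × ℂ) (t : ℕ) (A : ℕ → ℂ × ℂ) (α : ℕ → ℕ)
    (hanti : ∀ i i' : ℕ, 1 ≤ i → i ≤ i' → i' ≤ t → α i' ≤ α i) :
    Ideal.span ((fun u => (∏ i ∈ Finset.Icc 1 u, Hf (A i)) *
        ∏ j ∈ Finset.Icc 1 (α (u + 1)), Vf (B j)) '' Set.Iic t)
      ≤ ⨅ i ∈ Finset.Icc 1 t,
          Ideal.span {Hf (A i), ∏ j ∈ Finset.Icc 1 (α i), Vf (B j)} := by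
  rw [Ideal.span_le]
  rintro x ⟨u, hu, rfl⟩
  rw [SetLike.mem_coe, mem_biInf]
  beta_reduce
  intro i hi
  rw [Finset.mem_Icc] at hi
  rcases le_or_gt i u with hle | hlt
  · obtain ⟨c, hc⟩ := Finset.dvd_prod_of_mem (fun i => Hf (A i))
      (Finset.mem_Icc.mpr ⟨hi.1, hle⟩)
    rw [hc, mul_assoc]
    exact Ideal.mul_mem_right _ _ mem_span_pair_left
  · have hα : α i ≤ α (u + 1) := hanti (u + 1) i (by omega) (by omega) hi.2
    have hdvd : (∏ j ∈ Finset.Icc 1 (α i), Vf (B j))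
        ∣ ∏ j ∈ Finset.Icc 1 (α (u + 1)), Vf (B j) :=
      Finset.prod_dvd_prod_of_subset _ _ _ (Finset.Icc_subset_Icc_right hα)
    exact Ideal.mul_mem_left _ _ (mem_span_pair_right_dvd hdvd)

lemma rows (B : ℕ → ℂ × ℂ) (M : ℕ)
    (hB0 : ∀ j ∈ Finset.Icc 1 M, B j ≠ 0)
    (hBd : ∀ j ∈ Finset.Icc 1 M, ∀ j' ∈ Finset.Icc 1 M, j ≠ j' →
      cross (B j) (B j') ≠ 0) :
    ∀ (t : ℕ) (A : ℕ → ℂ × ℂ) (α : ℕ → ℕ),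
    (∀ i ∈ Finset.Icc 1 t, A i ≠ 0) →
    (∀ i ∈ Finset.Icc 1 t, ∀ i' ∈ Finset.Icc 1 t, i ≠ i' →
      cross (A i) (A i') ≠ 0) →
    (∀ i i' : ℕ, 1 ≤ i → i ≤ i' → i' ≤ t → α i' ≤ α i) →
    α (t + 1) = 0 →
    (∀ i ∈ Finset.Icc 1 t, α i ≤ M) →
    (⨅ i ∈ Finset.Icc 1 t,
        Ideal.span {Hf (A i), ∏ j ∈ Finset.Icc 1 (α i), Vf (B j)})
      = Ideal.span ((fun u => (∏ i ∈ Finset.Icc 1 u, Hf (A i)) *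
          ∏ j ∈ Finset.Icc 1 (α (u + 1)), Vf (B j)) '' Set.Iic t) := by
  intro t
  induction t with
  | zero =>
      intro A α _ _ _ hα0 _
      have h1 : (⨅ i ∈ Finset.Icc 1 0,
          Ideal.span {Hf (A i), ∏ j ∈ Finset.Icc 1 (α i), Vf (B j)}) = ⊤ := by
        rw [show Finset.Icc 1 0 = (∅ : Finset ℕ) by simp]
        simp
      rw [h1, eq_comm, Ideal.eq_top_iff_one]
      have hmem : (1 : R) ∈ ((fun u => (∏ i ∈ Finset.Icc 1 u, Hf (A i)) *
          ∏ j ∈ Finset.Icc 1 (α (u + 1)), Vf (B j)) '' Set.Iic 0) := by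
        have hα1 : α 1 = 0 := hα0
        exact ⟨0, by simp, by beta_reduce; simp [hα1]⟩
      exact Ideal.subset_span hmem
  | succ t IH =>
      intro A α hA0 hAd hanti hα0 hαM
      refine le_antisymm ?_ (rows_le B (t + 1) A α hanti)
      intro g hg
      rw [mem_biInf] at hg
      have h1mem : (1 : ℕ) ∈ Finset.Icc 1 (t + 1) := by simp
      obtain ⟨p, q, hpq⟩ := Ideal.mem_span_pair.mp (hg 1 h1mem)
      -- hypotheses for the shifted configuration
      have hsub : ∀ i : ℕ, i ∈ Finset.Icc 1 t → i + 1 ∈ Finset.Icc 1 (t + 1) := by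
        intro i hi; rw [Finset.mem_Icc] at *; omega
      have hA0' : ∀ i ∈ Finset.Icc 1 t, A (i + 1) ≠ 0 :=
        fun i hi => hA0 _ (hsub i hi)
      have hAd' : ∀ i ∈ Finset.Icc 1 t, ∀ i' ∈ Finset.Icc 1 t, i ≠ i' →
          cross (A (i + 1)) (A (i' + 1)) ≠ 0 :=
        fun i hi i' hi' hne => hAd _ (hsub i hi) _ (hsub i' hi') (by omega)
      have hanti' : ∀ i i' : ℕ, 1 ≤ i → i ≤ i' → i' ≤ t → α (i' + 1) ≤ α (i + 1) :=
        fun i i' h1 h2 h3 => hanti (i + 1) (i' + 1) (by omega) (by omega) (by omega)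
      have hαM' : ∀ i ∈ Finset.Icc 1 t, α (i + 1) ≤ M :=
        fun i hi => hαM _ (hsub i hi)
      have hIH := IH (fun i => A (i + 1)) (fun i => α (i + 1))
        hA0' hAd' hanti' hα0 hαM'
      beta_reduce at hIH
      -- p lies in the shifted intersection
      have hp : p ∈ ⨅ i ∈ Finset.Icc 1 t,
          Ideal.span {Hf (A (i + 1)), ∏ j ∈ Finset.Icc 1 (α (i + 1)), Vf (B j)} := by
        rw [mem_biInf]
        intro i hi
        have hi' : i + 1 ∈ Finset.Icc 1 (t + 1) := hsub i hi
        have hi1 : (1 : ℕ) ≤ i := (Finset.mem_Icc.mp hi).1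
        have hit : i ≤ t := (Finset.mem_Icc.mp hi).2
        have hBsub : ∀ j ∈ Finset.Icc 1 (α (i + 1)), j ∈ Finset.Icc 1 M := by
          intro j hj
          rw [Finset.mem_Icc] at hj ⊢
          have := hαM' i hi
          omega
        have hcol := column (A (i + 1)) (hA0 _ hi') B (α (i + 1))
          (fun j hj => hB0 j (hBsub j hj))
          (fun j hj j' hj' => hBd j (hBsub j hj) j' (hBsub j' hj'))
        have hα1 : α (i + 1) ≤ α 1 := hanti 1 (i + 1) le_rfl (by omega) (by omega)
        have hWdvd : (∏ j ∈ Finset.Icc 1 (α (i + 1)), Vf (B j))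
            ∣ ∏ j ∈ Finset.Icc 1 (α 1), Vf (B j) :=
          Finset.prod_dvd_prod_of_subset _ _ _ (Finset.Icc_subset_Icc_right hα1)
        have hpH : p * Hf (A 1) ∈
            Ideal.span {Hf (A (i + 1)), ∏ j ∈ Finset.Icc 1 (α (i + 1)), Vf (B j)} := by
          have heq : p * Hf (A 1)
              = g - q * ∏ j ∈ Finset.Icc 1 (α 1), Vf (B j) := by
            linear_combination hpq
          rw [heq]
          exact Ideal.sub_mem _ (hg _ hi')
            (Ideal.mul_mem_left _ _ (mem_span_pair_right_dvd hWdvd))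
        rw [← hcol] at hpH ⊢
        rw [mem_biInf] at hpH ⊢
        intro j hj
        have hP : (Ideal.span {Hf (A (i + 1)), Vf (B j)}).IsPrime :=
          Ipt_isPrime (hA0 _ hi') (hB0 _ (hBsub j hj))
        rcases hP.mem_or_mem (hpH j hj) with h | h
        · exact h
        · exact absurd h (Hf_not_mem (hA0 _ hi') (hB0 _ (hBsub j hj))
            (hAd _ hi' 1 h1mem (by omega)))
      rw [hIH] at hp
      -- conclude
      have hq : q * ∏ j ∈ Finset.Icc 1 (α 1), Vf (B j) ∈
          Ideal.span ((fun u => (∏ i ∈ Finset.Icc 1 u, Hf (A i)) *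
            ∏ j ∈ Finset.Icc 1 (α (u + 1)), Vf (B j)) '' Set.Iic (t + 1)) := by
        have hmem : (∏ i ∈ Finset.Icc 1 0, Hf (A i)) *
            ∏ j ∈ Finset.Icc 1 (α (0 + 1)), Vf (B j) ∈
            ((fun u => (∏ i ∈ Finset.Icc 1 u, Hf (A i)) *
              ∏ j ∈ Finset.Icc 1 (α (u + 1)), Vf (B j)) '' Set.Iic (t + 1)) :=
          ⟨0, by simp, rfl⟩
        have := Ideal.mul_mem_left _ q (Ideal.subset_span hmem)
        simpa using this
      have key : ∀ x : R, x ∈ Ideal.span ((fun u => (∏ i ∈ Finset.Icc 1 u, Hf (A (i + 1))) *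
            ∏ j ∈ Finset.Icc 1 (α (u + 1 + 1)), Vf (B j)) '' Set.Iic t) →
          x * Hf (A 1) ∈
          Ideal.span ((fun u => (∏ i ∈ Finset.Icc 1 u, Hf (A i)) *
            ∏ j ∈ Finset.Icc 1 (α (u + 1)), Vf (B j)) '' Set.Iic (t + 1)) := by
        intro x hx
        induction hx using Submodule.span_induction with
        | mem x hx =>
            obtain ⟨u, hu, rfl⟩ := hx
            have heq : ((∏ i ∈ Finset.Icc 1 u, Hf (A (i + 1))) *
                ∏ j ∈ Finset.Icc 1 (α (u + 1 + 1)), Vf (B j)) * Hf (A 1)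
                = (∏ i ∈ Finset.Icc 1 (u + 1), Hf (A i)) *
                  ∏ j ∈ Finset.Icc 1 (α (u + 1 + 1)), Vf (B j) := by
              rw [prod_shift (fun i => Hf (A i)) u]
              ring
            rw [heq]
            exact Ideal.subset_span ⟨u + 1,
              by simp only [Set.mem_Iic] at hu ⊢; omega, rfl⟩
        | zero => simpa using Ideal.zero_mem _
        | add x y hx hy hx' hy' =>
            rw [add_mul]
            exact Ideal.add_mem _ hx' hy'
        | smul r x hx hx' =>
            rw [smul_eq_mul, mul_assoc]
            exact Ideal.mul_mem_left _ _ hx'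
      have hpH1 := key p hp
      rw [← hpq]
      exact Ideal.add_mem _ hpH1 hq

/-! ### Assembly -/

theorem statement3' (S : Staircase) (α : ℕ → ℕ)
    (hα : ∀ k, k < S.r → ∀ i, S.t k < i → i ≤ S.t (k + 1) → α i = S.s (S.r - k)) :
    Ideal.span (stairGen S '' Set.Iic S.r) =
      ⨅ i ∈ Finset.Icc 1 (S.t S.r), ⨅ j ∈ Finset.Icc 1 (α i), Ipt (S.A i, S.B j) := by
  classical
  set α' : ℕ → ℕ := fun i => if i ≤ S.t S.r then α i else 0 with hα'def
  -- level decomposition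
  have hlevel : ∀ i : ℕ, 1 ≤ i → i ≤ S.t S.r →
      ∃ k, k < S.r ∧ S.t k < i ∧ i ≤ S.t (k + 1) ∧ α i = S.s (S.r - k) := by
    intro i h1 h2
    obtain ⟨k, hk, hk1, hk2⟩ := stair_level S.r S.ht i (by rw [S.ht0]; omega) h2
    exact ⟨k, hk, hk1, hk2, hα k hk i hk1 hk2⟩
  have hα'eq : ∀ i : ℕ, i ≤ S.t S.r → α' i = α i := by
    intro i hi; simp [hα'def, hi]
  have htop : α' (S.t S.r + 1) = 0 := by simp [hα'def]
  -- antitone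
  have hanti : ∀ i i' : ℕ, 1 ≤ i → i ≤ i' → i' ≤ S.t S.r → α' i' ≤ α' i := by
    intro i i' h1 h2 h3
    obtain ⟨k, hk, hk1, hk2, hk3⟩ := hlevel i h1 (by omega)
    obtain ⟨k', hk', hk1', hk2', hk3'⟩ := hlevel i' (by omega) h3
    rw [hα'eq i (by omega), hα'eq i' h3, hk3, hk3']
    have hkk' : k ≤ k' := by
      by_contra hcon
      have : k' + 1 ≤ k := by omega
      have := stair_mono S.ht (k' + 1) k this (by omega)
      omega
    exact stair_mono S.hs (S.r - k') (S.r - k) (by omega) (by omega)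
  have hαM : ∀ i ∈ Finset.Icc 1 (S.t S.r), α' i ≤ S.s S.r := by
    intro i hi
    rw [Finset.mem_Icc] at hi
    obtain ⟨k, hk, hk1, hk2, hk3⟩ := hlevel i hi.1 hi.2
    rw [hα'eq i hi.2, hk3]
    exact stair_mono S.hs (S.r - k) S.r (by omega) le_rfl
  -- value of α' at t k + 1
  have hαtk : ∀ k : ℕ, k ≤ S.r → α' (S.t k + 1) = S.s (S.r - k) := by
    intro k hk
    rcases eq_or_lt_of_le hk with rfl | hlt
    · rw [htop, Nat.sub_self, S.hs0]
    · have h1 : S.t k + 1 ≤ S.t (k + 1) := S.ht k hlt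
      have h2 : S.t (k + 1) ≤ S.t S.r := stair_mono S.ht (k + 1) S.r (by omega) le_rfl
      rw [hα'eq _ (by omega)]
      exact hα k hlt (S.t k + 1) (by omega) h1
  -- Step 1: rewrite RHS columns
  have hstep1 : (⨅ i ∈ Finset.Icc 1 (S.t S.r), ⨅ j ∈ Finset.Icc 1 (α i),
        Ipt (S.A i, S.B j))
      = ⨅ i ∈ Finset.Icc 1 (S.t S.r),
          Ideal.span {Hf (S.A i), ∏ j ∈ Finset.Icc 1 (α' i), Vf (S.B j)} := by
    refine iInf_congr fun i => iInf_congr fun hi => ?_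
    have hi' := Finset.mem_Icc.mp hi
    have hBsub : ∀ j ∈ Finset.Icc 1 (α' i), j ∈ Finset.Icc 1 (S.s S.r) := by
      intro j hj
      rw [Finset.mem_Icc] at hj ⊢
      have := hαM i hi
      omega
    have hcol := column (S.A i) (S.hA0 i hi) S.B (α' i)
      (fun j hj => S.hB0 j (hBsub j hj))
      (fun j hj j' hj' => S.hBd j (hBsub j hj) j' (hBsub j' hj'))
    rw [← hcol, hα'eq i hi'.2]
    rfl
  -- Step 2: rows lemma
  have hstep2 := rows S.B (S.s S.r) S.hB0 S.hBd (S.t S.r) S.A α'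
    S.hA0 S.hAd hanti htop hαM
  -- Step 3: the two generating sets span the same ideal
  have hstep3 : Ideal.span (stairGen S '' Set.Iic S.r)
      = Ideal.span ((fun u => (∏ i ∈ Finset.Icc 1 u, Hf (S.A i)) *
          ∏ j ∈ Finset.Icc 1 (α' (u + 1)), Vf (S.B j)) '' Set.Iic (S.t S.r)) := by
    apply le_antisymm
    · rw [Ideal.span_le]
      rintro x ⟨k, hk, rfl⟩
      rw [Set.mem_Iic] at hk
      have heq : (fun u => (∏ i ∈ Finset.Icc 1 u, Hf (S.A i)) *
          ∏ j ∈ Finset.Icc 1 (α' (u + 1)), Vf (S.B j)) (S.t k) = stairGen S k := by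
        beta_reduce
        rw [hαtk k hk, stairGen]
      exact Ideal.subset_span
        ⟨S.t k, by simpa using stair_mono S.ht k S.r hk le_rfl, heq⟩
    · rw [Ideal.span_le]
      rintro x ⟨u, hu, rfl⟩
      rw [Set.mem_Iic] at hu
      rw [SetLike.mem_coe]
      beta_reduce
      rcases eq_or_lt_of_le hu with rfl | hlt
      · have heq : stairGen S S.r = (∏ i ∈ Finset.Icc 1 (S.t S.r), Hf (S.A i)) *
            ∏ j ∈ Finset.Icc 1 (α' (S.t S.r + 1)), Vf (S.B j) := by
          rw [hαtk S.r le_rfl, stairGen]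
        rw [← heq]
        exact Ideal.subset_span ⟨S.r, by simp, rfl⟩
      · obtain ⟨k, hk, hk1, hk2, hk3⟩ := hlevel (u + 1) (by omega) (by omega)
        have hαu : α' (u + 1) = S.s (S.r - k) := by
          rw [hα'eq _ (by omega), hk3]
        obtain ⟨c, hc⟩ := Finset.prod_dvd_prod_of_subset (Finset.Icc 1 (S.t k))
          (Finset.Icc 1 u) (fun i => Hf (S.A i))
          (Finset.Icc_subset_Icc_right (by omega))
        have heq : (∏ i ∈ Finset.Icc 1 u, Hf (S.A i)) *
            ∏ j ∈ Finset.Icc 1 (α' (u + 1)), Vf (S.B j) = stairGen S k * c := by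
          rw [stairGen, hαu, hc]
          ring
        rw [heq]
        exact Ideal.mul_mem_right _ _
          (Ideal.subset_span ⟨k, by simp; omega, rfl⟩)
  rw [hstep3, ← hstep2, ← hstep1]

/-- Lemma 2.11: the ideal generated by the staircase generators f₀,…,f_r equals the
defining ideal of the associated Ferrers configuration (an ACM set of points), where
αᵢ = s_{r-k} for t_k < i ≤ t_{k+1}. -/
theorem statement3 (S : Staircase) (α : ℕ → ℕ)
    (hα : ∀ k, k < S.r → ∀ i, S.t k < i → i ≤ S.t (k + 1) → α i = S.s (S.r - k)) :
    Ideal.span (stairGen S '' Set.Iic S.r) =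
      ⨅ i ∈ Finset.Icc 1 (S.t S.r), ⨅ j ∈ Finset.Icc 1 (α i), Ipt (S.A i, S.B j) :=
  statement3' S α hα
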